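/- Let K ⊆ E be finite fields (E a finite field extension of K) and let n be a positive integer. Then the number of matrices C ∈ GL_n(E) satisfying C · M_n(K) · C⁻¹ = M_n(K), where M_n(K) denotes the subring of M_n(E) of matrices with all entries in K, is equal to |GL_n(K)| · (|E| − 1)/(|K| − 1). -/

import Mathlib

open Matrix

namespace Stmt8

variable (K E : Type*) [Field K] [Field E] [Algebra K E] (n : ℕ)

/-- entries-in-subring is closed under matrix multiplication -/
lemma aux_mul_mem {n : ℕ} {X Y : Matrix (Fin n) (Fin n) E}
    (hX : ∀ i j, X i j ∈ (algebraMap K E).range) (hY : ∀ i j, Y i j ∈ (algebraMap K E).range) :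
    ∀ i j, (X * Y) i j ∈ (algebraMap K E).range := by
  intro i j
  rw [Matrix.mul_apply]
  exact Subring.sum_mem _ fun k _ => Subring.mul_mem _ (hX i k) (hY k j)

lemma entry_eq {n : ℕ} (C D : Matrix (Fin n) (Fin n) E) (i j k l : Fin n) :
    (C * Matrix.single i j (1:E) * D) k l = C k i * D j l := by
  rw [Matrix.mul_assoc, Matrix.mul_apply]
  simp [Matrix.mul_apply, Matrix.single, ite_and, ite_mul, mul_ite, Finset.sum_ite_eq,
    Finset.sum_ite_eq']

/-- The homomorphism `GLₙ(K) × Eˣ →* GLₙ(E)`, `(A, e) ↦ ι(A) ⬝ (e • 1)`. -/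
def phi : (Matrix (Fin n) (Fin n) K)ˣ × Eˣ →* (Matrix (Fin n) (Fin n) E)ˣ where
  toFun p := Units.map ((algebraMap K E).mapMatrix : Matrix (Fin n) (Fin n) K →+* _).toMonoidHom p.1 *
    Units.map (Matrix.scalar (Fin n) : E →+* Matrix (Fin n) (Fin n) E).toMonoidHom p.2
  map_one' := by simp
  map_mul' p q := by
    simp only [Prod.fst_mul, Prod.snd_mul, _root_.map_mul]
    have hc : Commute
        (Units.map (Matrix.scalar (Fin n) : E →+* Matrix (Fin n) (Fin n) E).toMonoidHom p.2)
        (Units.map ((algebraMap K E).mapMatrix : Matrix (Fin n) (Fin n) K →+* _).toMonoidHom q.1) := by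
      apply Units.ext
      simpa using (Matrix.scalar_commute (n := Fin n) ((p.2 : E)) (Commute.all _) _).eq
    exact hc.symm.mul_mul_mul_comm _ _

lemma coe_phi (p : (Matrix (Fin n) (Fin n) K)ˣ × Eˣ) :
    ((phi K E n p : Matrix (Fin n) (Fin n) E)) =
      ((p.1 : Matrix (Fin n) (Fin n) K)).map (algebraMap K E) *
        Matrix.scalar (Fin n) (p.2 : E) := rfl

variable {K E n}

lemma map_mem (A : Matrix (Fin n) (Fin n) K) (i j : Fin n) :
    (A.map (algebraMap K E)) i j ∈ (algebraMap K E).range := ⟨A i j, rfl⟩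

/-- main characterization -/
lemma mem_range_iff (hn : 0 < n) (C : (Matrix (Fin n) (Fin n) E)ˣ) :
    ((fun M => (C : Matrix (Fin n) (Fin n) E) * M *
            ((C⁻¹ : (Matrix (Fin n) (Fin n) E)ˣ) : Matrix (Fin n) (Fin n) E)) ''
          {M : Matrix (Fin n) (Fin n) E | ∀ i j, M i j ∈ (algebraMap K E).range}
        = {M : Matrix (Fin n) (Fin n) E | ∀ i j, M i j ∈ (algebraMap K E).range})
      ↔ C ∈ (phi K E n).range := by
  constructor
  · intro hP
    -- key: products of entries of C and C⁻¹ lie in the subring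
    have key : ∀ i j k l, (C : Matrix (Fin n) (Fin n) E) k i *
        ((C⁻¹ : (Matrix (Fin n) (Fin n) E)ˣ) : Matrix (Fin n) (Fin n) E) j l ∈
          (algebraMap K E).range := by
      intro i j k l
      have hmemS : Matrix.single i j (1:E) ∈
          {M : Matrix (Fin n) (Fin n) E | ∀ i j, M i j ∈ (algebraMap K E).range} := by
        intro a b
        simp only [Matrix.single, Matrix.of_apply]
        split_ifs
        · exact ⟨1, map_one _⟩
        · exact ⟨0, map_zero _⟩
      have h2 : (C : Matrix (Fin n) (Fin n) E) * Matrix.single i j (1:E) *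
          ((C⁻¹ : (Matrix (Fin n) (Fin n) E)ˣ) : Matrix (Fin n) (Fin n) E) ∈
          {M : Matrix (Fin n) (Fin n) E | ∀ i j, M i j ∈ (algebraMap K E).range} := by
        rw [← hP]; exact ⟨_, hmemS, rfl⟩
      have := h2 k l
      rwa [entry_eq] at this
    -- some entry of C⁻¹ is nonzero
    have hD : ∃ j l, ((C⁻¹ : (Matrix (Fin n) (Fin n) E)ˣ) : Matrix (Fin n) (Fin n) E) j l ≠ 0 := by
      by_contra h
      push_neg at h
      have h1 : ((C⁻¹ : (Matrix (Fin n) (Fin n) E)ˣ) : Matrix (Fin n) (Fin n) E) = 0 := by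
        ext j l; exact h j l
      have h2 := C.inv_mul
      rw [h1, zero_mul] at h2
      have h3 : (0 : Matrix (Fin n) (Fin n) E) ⟨0, hn⟩ ⟨0, hn⟩ =
          (1 : Matrix (Fin n) (Fin n) E) ⟨0, hn⟩ ⟨0, hn⟩ := by rw [h2]
      rw [Matrix.zero_apply, Matrix.one_apply_eq] at h3
      exact zero_ne_one h3
    obtain ⟨j0, l0, hd⟩ := hD
    set d := ((C⁻¹ : (Matrix (Fin n) (Fin n) E)ˣ) : Matrix (Fin n) (Fin n) E) j0 l0 with hd_def
    have hA : ∀ k i, ∃ a : K, algebraMap K E a = d * (C : Matrix (Fin n) (Fin n) E) k i := by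
      intro k i
      obtain ⟨a, ha⟩ := key i j0 k l0
      exact ⟨a, by rw [ha, mul_comm]⟩
    choose A hAs using hA
    have hιA : (Matrix.of A).map (algebraMap K E) = d • (C : Matrix (Fin n) (Fin n) E) := by
      ext k i
      simp [Matrix.map_apply, hAs, Matrix.smul_apply, smul_eq_mul]
    have hCdet : IsUnit ((C : Matrix (Fin n) (Fin n) E)).det :=
      (Matrix.isUnit_iff_isUnit_det _).mp C.isUnit
    have hdet : IsUnit (Matrix.of A).det := by
      have h1 : algebraMap K E (Matrix.of A).det = ((Matrix.of A).map (algebraMap K E)).det :=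
        (RingHom.map_det _ _)
      rw [hιA] at h1
      have h2 : (d • (C : Matrix (Fin n) (Fin n) E)).det =
          d ^ n * ((C : Matrix (Fin n) (Fin n) E)).det := by
        simp [Matrix.det_smul, Fintype.card_fin]
      rw [h2] at h1
      have h3 : algebraMap K E (Matrix.of A).det ≠ 0 := by
        rw [h1]
        exact mul_ne_zero (pow_ne_zero _ hd) hCdet.ne_zero
      have h4 : (Matrix.of A).det ≠ 0 := fun h => h3 (by rw [h, map_zero])
      exact (isUnit_iff_ne_zero).mpr h4
    obtain ⟨Au, hAu⟩ := (Matrix.isUnit_iff_isUnit_det _).mpr hdet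
    refine ⟨(Au, (Units.mk0 d hd)⁻¹), Units.ext ?_⟩
    rw [coe_phi]
    simp only [hAu]
    rw [hιA]
    ext i j
    rw [Matrix.scalar_apply, Matrix.mul_diagonal]
    simp only [Matrix.smul_apply, smul_eq_mul]
    rw [Units.val_inv_eq_inv_val, Units.val_mk0]
    rw [mul_comm d, mul_assoc, mul_inv_cancel₀ hd, mul_one]
  · rintro ⟨⟨A, e⟩, rfl⟩
    -- conjugation by phi (A, e) is conjugation by ι(A)
    have hconj : ∀ M : Matrix (Fin n) (Fin n) E,
        ((phi K E n (A, e) : Matrix (Fin n) (Fin n) E)) * M *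
          (((phi K E n (A, e))⁻¹ : (Matrix (Fin n) (Fin n) E)ˣ) : Matrix (Fin n) (Fin n) E)
        = ((A : Matrix (Fin n) (Fin n) K)).map (algebraMap K E) * M *
          (((A⁻¹ : (Matrix (Fin n) (Fin n) K)ˣ) : Matrix (Fin n) (Fin n) K)).map (algebraMap K E) := by
      intro M
      have hinv : (phi K E n (A, e))⁻¹ = phi K E n (A⁻¹, e⁻¹) := by
        rw [← map_inv]; rfl
      rw [hinv, coe_phi, coe_phi]
      set s := Matrix.scalar (Fin n) ((e : E)) with hs
      set t := Matrix.scalar (Fin n) (((e⁻¹ : Eˣ) : E)) with ht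
      set B := ((A : Matrix (Fin n) (Fin n) K)).map (algebraMap K E)
      set B' := (((A⁻¹ : (Matrix (Fin n) (Fin n) K)ˣ) : Matrix (Fin n) (Fin n) K)).map (algebraMap K E)
      have hst : s * t = 1 := by
        rw [hs, ht, ← RingHom.map_mul, Units.mul_inv, RingHom.map_one]
      have hcM : ∀ X : Matrix (Fin n) (Fin n) E, s * X = X * s := fun X =>
        (Matrix.scalar_commute _ (Commute.all _) X).eq
      calc B * s * M * (B' * t) = B * (s * M) * B' * t := by
              simp only [mul_assoc]
        _ = B * (M * s) * B' * t := by rw [hcM M]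
        _ = B * M * (s * B') * t := by simp only [mul_assoc]
        _ = B * M * (B' * s) * t := by rw [hcM B']
        _ = B * M * B' * (s * t) := by simp only [mul_assoc]
        _ = B * M * B' := by rw [hst, mul_one]
    have hBmem : ∀ i j, ((A : Matrix (Fin n) (Fin n) K)).map (algebraMap K E) i j ∈
        (algebraMap K E).range := map_mem _
    have hB'mem : ∀ i j, (((A⁻¹ : (Matrix (Fin n) (Fin n) K)ˣ) : Matrix (Fin n) (Fin n) K)).map
        (algebraMap K E) i j ∈ (algebraMap K E).range := map_mem _
    have hBB' : ((A : Matrix (Fin n) (Fin n) K)).map (algebraMap K E) *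
        (((A⁻¹ : (Matrix (Fin n) (Fin n) K)ˣ) : Matrix (Fin n) (Fin n) K)).map (algebraMap K E)
        = 1 := by
      rw [← Matrix.map_mul, Units.mul_inv]
      simp
    have hB'B : (((A⁻¹ : (Matrix (Fin n) (Fin n) K)ˣ) : Matrix (Fin n) (Fin n) K)).map
        (algebraMap K E) * ((A : Matrix (Fin n) (Fin n) K)).map (algebraMap K E) = 1 := by
      rw [← Matrix.map_mul, Units.inv_mul]
      simp
    apply Set.Subset.antisymm
    · rintro _ ⟨M, hM, rfl⟩
      simp only [hconj M]
      exact aux_mul_mem K E (aux_mul_mem K E hBmem hM) hB'mem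
    · intro N hN
      set B := ((A : Matrix (Fin n) (Fin n) K)).map (algebraMap K E) with hB
      set B' := (((A⁻¹ : (Matrix (Fin n) (Fin n) K)ˣ) : Matrix (Fin n) (Fin n) K)).map
        (algebraMap K E) with hB'
      refine ⟨B' * N * B, aux_mul_mem K E (aux_mul_mem K E hB'mem hN) hBmem, ?_⟩
      simp only [hconj]
      calc B * (B' * N * B) * B' = (B * B') * N * (B * B') := by simp only [mul_assoc]
        _ = N := by rw [hBB', one_mul, mul_one]

lemma card_ker (hn : 0 < n) : Nat.card (phi K E n).ker = Nat.card K - 1 := by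
  rw [← Nat.card_units]
  symm
  apply Nat.card_congr
  have hmem : ∀ k : Kˣ,
      ((Units.map (Matrix.scalar (Fin n) : K →+* Matrix (Fin n) (Fin n) K).toMonoidHom k),
        (Units.map (algebraMap K E).toMonoidHom k)⁻¹) ∈ (phi K E n).ker := by
    intro k
    rw [MonoidHom.mem_ker]
    apply Units.ext
    rw [coe_phi]
    simp only [Units.coe_map, MonoidHom.coe_coe, Units.val_one, RingHom.toMonoidHom_eq_coe]
    have h1 : (Matrix.scalar (Fin n) ((k : K))).map (algebraMap K E) =
        Matrix.scalar (Fin n) (algebraMap K E (k : K)) := by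
      rw [Matrix.scalar_apply, Matrix.scalar_apply, Matrix.diagonal_map (map_zero _)]
    rw [h1, ← map_inv, Units.coe_map, MonoidHom.coe_coe, ← RingHom.map_mul,
      ← RingHom.map_mul, Units.mul_inv, RingHom.map_one, RingHom.map_one]
  refine Equiv.ofBijective (fun k => ⟨_, hmem k⟩) ⟨?_, ?_⟩
  · intro k1 k2 h
    have h2 := congrArg (fun x => ((x : ((Matrix (Fin n) (Fin n) K)ˣ × Eˣ)).2))
      (congrArg Subtype.val h)
    have h3 := inv_injective h2
    have h4 : algebraMap K E (k1 : K) = algebraMap K E (k2 : K) := by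
      simpa using congrArg Units.val h3
    exact Units.ext ((algebraMap K E).injective h4)
  · rintro ⟨⟨A, e⟩, hmemk⟩
    rw [MonoidHom.mem_ker] at hmemk
    have hv : ((A : Matrix (Fin n) (Fin n) K)).map (algebraMap K E) *
        Matrix.scalar (Fin n) ((e : E)) = 1 := by
      have h0 := congrArg Units.val hmemk
      rw [coe_phi] at h0
      simpa using h0
    have key : ∀ i j, algebraMap K E ((A : Matrix (Fin n) (Fin n) K) i j) * (e : E) =
        if i = j then 1 else 0 := by
      intro i j
      have h5 : (((A : Matrix (Fin n) (Fin n) K)).map (algebraMap K E) *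
          Matrix.scalar (Fin n) ((e : E))) i j = (1 : Matrix (Fin n) (Fin n) E) i j := by
        rw [hv]
      rwa [Matrix.scalar_apply, Matrix.mul_diagonal, Matrix.map_apply, Matrix.one_apply] at h5
    have hene : (e : E) ≠ 0 := Units.ne_zero e
    set i0 : Fin n := ⟨0, hn⟩
    set k0 := (A : Matrix (Fin n) (Fin n) K) i0 i0 with hk0def
    have hk0 : algebraMap K E k0 * (e : E) = 1 := by simpa using key i0 i0
    have hkne : k0 ≠ 0 := by
      intro h
      rw [h, map_zero, zero_mul] at hk0
      exact zero_ne_one hk0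
    refine ⟨Units.mk0 k0 hkne, ?_⟩
    apply Subtype.ext
    have hc1 : Units.map (Matrix.scalar (Fin n) : K →+* Matrix (Fin n) (Fin n) K).toMonoidHom
        (Units.mk0 k0 hkne) = A := by
      apply Units.ext
      simp only [Units.coe_map, MonoidHom.coe_coe, Units.val_mk0, RingHom.toMonoidHom_eq_coe]
      ext i j
      rw [Matrix.scalar_apply, Matrix.diagonal_apply]
      by_cases hij : i = j
      · subst hij
        simp only [if_pos rfl]
        have ha := key i i
        rw [if_pos rfl] at ha
        have h6 := mul_right_cancel₀ hene (ha.trans hk0.symm)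
        exact ((algebraMap K E).injective h6).symm
      · simp only [if_neg hij]
        have ha := key i j
        rw [if_neg hij] at ha
        have h7 : algebraMap K E ((A : Matrix (Fin n) (Fin n) K) i j) = 0 :=
          (mul_eq_zero.mp ha).resolve_right hene
        have h8 := (algebraMap K E).injective (h7.trans (map_zero (algebraMap K E)).symm)
        exact h8.symm
    have hc2 : (Units.map (algebraMap K E).toMonoidHom (Units.mk0 k0 hkne))⁻¹ = e := by
      apply Units.ext
      rw [Units.val_inv_eq_inv_val]
      simp only [Units.coe_map, MonoidHom.coe_coe, Units.val_mk0, RingHom.toMonoidHom_eq_coe]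
      exact inv_eq_of_mul_eq_one_right hk0
    exact Prod.ext hc1 hc2

end Stmt8

theorem stmt_8 (K E : Type*) [Field K] [Field E] [Algebra K E] [Finite E]
    (n : ℕ) (hn : 0 < n) :
    Nat.card {C : (Matrix (Fin n) (Fin n) E)ˣ //
        (fun M => (C : Matrix (Fin n) (Fin n) E) * M *
            ((C⁻¹ : (Matrix (Fin n) (Fin n) E)ˣ) : Matrix (Fin n) (Fin n) E)) ''
          {M : Matrix (Fin n) (Fin n) E | ∀ i j, M i j ∈ (algebraMap K E).range}
        = {M : Matrix (Fin n) (Fin n) E | ∀ i j, M i j ∈ (algebraMap K E).range}}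
      = Nat.card (Matrix (Fin n) (Fin n) K)ˣ * ((Nat.card E - 1) / (Nat.card K - 1)) := by
  classical
  haveI hKfin : Finite K := Finite.of_injective _ (algebraMap K E).injective
  have h1 : Nat.card {C : (Matrix (Fin n) (Fin n) E)ˣ //
        (fun M => (C : Matrix (Fin n) (Fin n) E) * M *
            ((C⁻¹ : (Matrix (Fin n) (Fin n) E)ˣ) : Matrix (Fin n) (Fin n) E)) ''
          {M : Matrix (Fin n) (Fin n) E | ∀ i j, M i j ∈ (algebraMap K E).range}
        = {M : Matrix (Fin n) (Fin n) E | ∀ i j, M i j ∈ (algebraMap K E).range}}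
      = Nat.card (Stmt8.phi K E n).range :=
    Nat.card_congr (Equiv.subtypeEquivRight fun C => Stmt8.mem_range_iff hn C)
  rw [h1]
  have hquot : Nat.card ((Matrix (Fin n) (Fin n) K)ˣ × Eˣ) =
      Nat.card (Stmt8.phi K E n).range * Nat.card (Stmt8.phi K E n).ker := by
    rw [Subgroup.card_eq_card_quotient_mul_card_subgroup (Stmt8.phi K E n).ker]
    congr 1
    exact Nat.card_congr (QuotientGroup.quotientKerEquivRange _).toEquiv
  rw [Stmt8.card_ker hn, Nat.card_prod, Nat.card_units] at hquot
  -- divisibility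
  have hdvd : (Nat.card K - 1) ∣ (Nat.card E - 1) := by
    rw [← Nat.card_units, ← Nat.card_units]
    have hinj : Function.Injective (Units.map (algebraMap K E).toMonoidHom) :=
      Units.map_injective (algebraMap K E).injective
    calc Nat.card Kˣ = Nat.card (Units.map (algebraMap K E).toMonoidHom).range :=
          Nat.card_congr (MonoidHom.ofInjective hinj).toEquiv
      _ ∣ Nat.card Eˣ := Subgroup.card_subgroup_dvd_card _
  have h2 : 1 < Nat.card K := Finite.one_lt_card
  have hkpos : 0 < Nat.card K - 1 := Nat.sub_pos_of_lt h2
  obtain ⟨m, hm⟩ := hdvd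
  rw [hm, Nat.mul_div_cancel_left _ hkpos]
  rw [hm] at hquot
  apply Nat.eq_of_mul_eq_mul_right hkpos
  rw [← hquot]
  ring
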